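/- (Intermediate identity in the proof of Lemma 4.2) Let Q_n(λ) = det(B_n − λI) and P_n(λ) = det(A_n − λI) (both in the convention det(M − λI)). Then for every n ≥ 7 the identity Q_n(λ) = (1 − λ) P_n(λ) + λ² P_{n−4}(λ) holds as an identity of polynomials. -/

import Mathlib

/-- Adjacency matrix of the composability digraph of the `n` first-order
differential operations `∇_1, …, ∇_n` on `ℝⁿ` (index `i : Fin n` represents
the operation `∇_{i+1}`): there is an edge `i → j` iff `j = i + 1` or
`i + j = n + 1` (in the 1-based indexing of the paper). -/
def adjA (n : ℕ) : Matrix (Fin n) (Fin n) ℤ :=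
  Matrix.of fun i j =>
    if (j : ℕ) = (i : ℕ) + 1 ∨ (i : ℕ) + (j : ℕ) + 2 = n + 1 then 1 else 0

/-- `fCount n k` is the number of meaningful `k`-th order compositions of the
differential operations on `ℝⁿ`, i.e. the number of sequences
`(i_1, …, i_k) ∈ {1, …, n}^k` each consecutive pair of which is composable. -/
def fCount (n k : ℕ) : ℕ :=
  (Finset.univ.filter fun s : Fin k → Fin n =>
    ∀ i j : Fin k, (j : ℕ) = (i : ℕ) + 1 → adjA n (s i) (s j) = 1).card

/-- Adjacency matrix of the composability digraph of the Gateaux directional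
derivative `∇_0` together with the `n` first-order differential operations
`∇_1, …, ∇_n` on `ℝⁿ` (index `i : Fin (n+1)` represents `∇_i`): there is an
edge `i → j` iff `(i = 0 ∧ j = 0)` or `(i = n ∧ j = 0)` or `j = i + 1` or
`i + j = n + 1`. -/
def adjB (n : ℕ) : Matrix (Fin (n + 1)) (Fin (n + 1)) ℤ :=
  Matrix.of fun i j =>
    if ((i : ℕ) = 0 ∧ (j : ℕ) = 0) ∨ ((i : ℕ) = n ∧ (j : ℕ) = 0) ∨
        (j : ℕ) = (i : ℕ) + 1 ∨ (i : ℕ) + (j : ℕ) = n + 1 then 1 else 0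

/-- `gCount n k` is the number of meaningful `k`-th order compositions of the
differential operations together with the Gateaux directional derivative on
`ℝⁿ`, i.e. the number of sequences `(i_1, …, i_k) ∈ {0, 1, …, n}^k` each
consecutive pair of which is composable. -/
def gCount (n k : ℕ) : ℕ :=
  (Finset.univ.filter fun s : Fin k → Fin (n + 1) =>
    ∀ i j : Fin k, (j : ℕ) = (i : ℕ) + 1 → adjB n (s i) (s j) = 1).card

/-- `Pp n` is the polynomial `P_n(λ) = det (A_n - λ I)`. -/
noncomputable def Pp (n : ℕ) : Polynomial ℤ :=
  ((adjA n).map Polynomial.C - Matrix.scalar (Fin n) Polynomial.X).det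

/-- `Qp n` is the polynomial `Q_n(λ) = det (B_n - λ I)`. -/
noncomputable def Qp (n : ℕ) : Polynomial ℤ :=
  ((adjB n).map Polynomial.C - Matrix.scalar (Fin (n + 1)) Polynomial.X).det

open Polynomial Matrix Finset

namespace QpAux

lemma coe_succAbove {m : ℕ} (p : Fin (m+1)) (j : Fin m) :
    ((p.succAbove j : Fin (m+1)) : ℕ) = if (j:ℕ) < (p:ℕ) then (j:ℕ) else (j:ℕ)+1 := by
  rw [Fin.succAbove]
  split <;> rename_i h <;> simp [Fin.lt_def] at h <;>
    [rw [if_pos h]; rw [if_neg (by omega)]] <;> simp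

/-- minor of `B - λI` obtained by deleting the last row and column `0`. -/
noncomputable def m2 (k : ℕ) : Matrix (Fin (k+7)) (Fin (k+7)) (Polynomial ℤ) :=
  Matrix.of fun i j => (if (j:ℕ) = (i:ℕ) ∨ (i:ℕ)+(j:ℕ) = k+7 then 1 else 0)
    - (if (i:ℕ) = (j:ℕ)+1 then Polynomial.X else 0)

noncomputable def m3 (k : ℕ) : Matrix (Fin (k+6)) (Fin (k+6)) (Polynomial ℤ) :=
  Matrix.of fun i j => (if (j:ℕ) = (i:ℕ) ∨ (i:ℕ)+(j:ℕ) = k+5 then 1 else 0)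
    - (if (i:ℕ) = (j:ℕ)+1 then Polynomial.X else 0)

/-- `m3` after the row operation row(last) ← row(last) - row(0). -/
noncomputable def m3' (k : ℕ) : Matrix (Fin (k+6)) (Fin (k+6)) (Polynomial ℤ) :=
  Matrix.of fun i j =>
    if (i:ℕ) = k+5 then (if (j:ℕ) = k+4 then -Polynomial.X else 0) else
      (if (j:ℕ) = (i:ℕ) ∨ (i:ℕ)+(j:ℕ) = k+5 then 1 else 0)
        - (if (i:ℕ) = (j:ℕ)+1 then Polynomial.X else 0)

noncomputable def m4 (k : ℕ) : Matrix (Fin (k+5)) (Fin (k+5)) (Polynomial ℤ) :=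
  Matrix.of fun i j =>
    if (j:ℕ) = k+4 then (if (i:ℕ) = 0 then 1 else 0) else
      (if (j:ℕ) = (i:ℕ) ∨ (i:ℕ)+(j:ℕ) = k+5 then 1 else 0)
        - (if (i:ℕ) = (j:ℕ)+1 then Polynomial.X else 0)

noncomputable def m5 (k : ℕ) : Matrix (Fin (k+4)) (Fin (k+4)) (Polynomial ℤ) :=
  Matrix.of fun i j => (if (j:ℕ) = (i:ℕ)+1 ∨ (i:ℕ)+(j:ℕ) = k+4 then 1 else 0)
    - (if (i:ℕ) = (j:ℕ) then Polynomial.X else 0)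

lemma step1 (k : ℕ) :
    Qp (k+7) = (1 - Polynomial.X) * Pp (k+7) + (-1)^(k+7) * (m2 k).det := by
  set B : Matrix (Fin (k+7+1)) (Fin (k+7+1)) (Polynomial ℤ) :=
    (adjB (k+7)).map Polynomial.C - Matrix.scalar (Fin (k+7+1)) Polynomial.X with hB
  have hBe : ∀ i j : Fin (k+7+1), B i j =
      (if ((i:ℕ) = 0 ∧ (j:ℕ) = 0) ∨ ((i:ℕ) = k+7 ∧ (j:ℕ) = 0) ∨
        (j:ℕ) = (i:ℕ)+1 ∨ (i:ℕ)+(j:ℕ) = k+7+1 then 1 else 0)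
      - (if (i:ℕ) = (j:ℕ) then Polynomial.X else 0) := by
    intro i j
    simp only [hB, adjB, Matrix.sub_apply, Matrix.map_apply, Matrix.scalar_apply,
      Matrix.diagonal_apply, Matrix.of_apply, apply_ite Polynomial.C,
      Polynomial.C_1, Polynomial.C_0, Fin.ext_iff]
  have hQ : Qp (k+7) = B.det := rfl
  rw [hQ, Matrix.det_succ_column_zero]
  have hvan : ∀ x ∈ (univ : Finset (Fin (k+7+1))),
      x ∉ ({0, Fin.last (k+7)} : Finset (Fin (k+7+1))) →
      (-1)^(x:ℕ) * B x 0 * (B.submatrix x.succAbove Fin.succ).det = 0 := by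
    intro x _ hx
    simp only [Finset.mem_insert, Finset.mem_singleton, not_or] at hx
    obtain ⟨hx0, hxl⟩ := hx
    have h0 : (x:ℕ) ≠ 0 := fun h => hx0 (Fin.ext (by simpa using h))
    have hl : (x:ℕ) ≠ k+7 := fun h => hxl (Fin.ext (by simpa using h))
    have hxlt := x.isLt
    have : B x 0 = 0 := by
      rw [hBe]
      rw [if_neg (by simp only [Fin.val_zero]; omega), if_neg (by simp only [Fin.val_zero]; omega), sub_zero]
    rw [this, mul_zero, zero_mul]
  rw [← Finset.sum_subset (Finset.subset_univ _) hvan,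
    Finset.sum_pair (by simp [Fin.ext_iff] : (0 : Fin (k+7+1)) ≠ Fin.last (k+7))]
  have hB00 : B 0 0 = 1 - Polynomial.X := by
    rw [hBe]; simp
  have hBl0 : B (Fin.last (k+7)) 0 = 1 := by
    rw [hBe]
    rw [if_pos (by simp), if_neg (by simp), sub_zero]
  have hmin0 : (B.submatrix (Fin.succAbove 0) Fin.succ).det = Pp (k+7) := by
    rw [Fin.succAbove_zero, Pp]
    congr 1
    refine Matrix.ext fun i j => ?_
    have hi := i.isLt; have hj := j.isLt
    rw [Matrix.submatrix_apply, hBe]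
    simp only [adjA, Matrix.sub_apply, Matrix.map_apply, Matrix.scalar_apply,
      Matrix.diagonal_apply, Matrix.of_apply, apply_ite Polynomial.C,
      Polynomial.C_1, Polynomial.C_0, Fin.ext_iff, Fin.val_succ]
    split_ifs <;> first | rfl | omega |
      (simp only [false_and, false_or, and_false] at * <;> omega)
  have hminl : (B.submatrix (Fin.succAbove (Fin.last (k+7))) Fin.succ).det = (m2 k).det := by
    rw [Fin.succAbove_last]
    congr 1
    refine Matrix.ext fun i j => ?_
    have hi := i.isLt; have hj := j.isLt
    rw [Matrix.submatrix_apply, hBe]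
    simp only [m2, Matrix.of_apply, Fin.val_succ, Fin.coe_castSucc]
    split_ifs <;> first | rfl | omega |
      (simp only [false_and, false_or, and_false] at * <;> omega)
  rw [hB00, hBl0, hmin0, hminl]
  simp only [Fin.val_zero, Fin.val_last, pow_zero, one_mul, mul_one]


lemma step2 (k : ℕ) : (m2 k).det = (m3 k).det := by
  rw [Matrix.det_succ_row_zero (m2 k)]
  rw [Finset.sum_eq_single (0 : Fin (k+7))]
  · have h00 : m2 k 0 0 = 1 := by
      simp [m2]
    rw [h00, Fin.succAbove_zero]
    simp only [Fin.val_zero, pow_zero, one_mul, mul_one]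
    congr 1
    ext i j
    have hi := i.isLt; have hj := j.isLt
    simp only [m2, m3, Matrix.submatrix_apply, Matrix.of_apply, Fin.val_succ]
    split_ifs <;> first | rfl | omega
  · intro j _ hj
    have hj' : (j:ℕ) ≠ 0 := fun h => hj (Fin.ext h)
    have hjl := j.isLt
    have : m2 k 0 j = 0 := by
      simp only [m2, Matrix.of_apply]
      rw [if_neg (by simp only [Fin.val_zero]; omega), if_neg (by simp only [Fin.val_zero]; omega), sub_zero]
    rw [this, mul_zero, zero_mul]
  · intro h; exact absurd (Finset.mem_univ _) h


lemma step3 (k : ℕ) : (m3 k).det = (m3' k).det := by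
  have hne : (Fin.last (k+5)) ≠ (0 : Fin (k+6)) := by simp [Fin.ext_iff]
  have h : m3' k = (m3 k).updateRow (Fin.last (k+5))
      (m3 k (Fin.last (k+5)) + (-1 : Polynomial ℤ) • m3 k 0) := by
    refine Matrix.ext fun i j => ?_
    have hj := j.isLt
    by_cases hi : i = Fin.last (k+5)
    · subst hi
      rw [Matrix.updateRow_self]
      simp only [m3, m3', Matrix.of_apply, Pi.add_apply, Pi.smul_apply, smul_eq_mul,
        Fin.val_last, Fin.val_zero]
      rw [if_pos trivial]
      split_ifs <;> simp_all
    · rw [Matrix.updateRow_ne hi]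
      have hi' : (i:ℕ) ≠ k+5 := fun hv => hi (Fin.ext (by simp [hv]))
      simp only [m3, m3', Matrix.of_apply]
      rw [if_neg hi']
  rw [h, Matrix.det_updateRow_add_smul_self (m3 k) hne (-1)]


lemma step4 (k : ℕ) : (m3' k).det = Polynomial.X * (m4 k).det := by
  rw [Matrix.det_succ_row (m3' k) (Fin.last (k+5))]
  rw [Finset.sum_eq_single (⟨k+4, by omega⟩ : Fin (k+6))]
  · have hent : m3' k (Fin.last (k+5)) ⟨k+4, by omega⟩ = -Polynomial.X := by
      simp [m3']
    rw [hent, Fin.succAbove_last]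
    simp only [Fin.val_last]
    have hsign : ((-1 : Polynomial ℤ))^((k+5)+(k+4:ℕ)) = -1 :=
      Odd.neg_one_pow ⟨k+4, by ring⟩
    rw [hsign]
    have hsub : (m3' k).submatrix Fin.castSucc
        (Fin.succAbove (⟨k+4, by omega⟩ : Fin (k+6))) = m4 k := by
      refine Matrix.ext fun i j => ?_
      have hi := i.isLt; have hj := j.isLt
      simp only [m3', m4, Matrix.submatrix_apply, Matrix.of_apply, Fin.coe_castSucc,
        coe_succAbove, Fin.val_mk]
      rw [if_neg (by omega)]
      split_ifs <;> first | rfl | omega | ring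
    rw [hsub]; ring
  · intro j _ hj0
    have hj' : (j:ℕ) ≠ k+4 := fun hv => hj0 (Fin.ext (by simpa using hv))
    have : m3' k (Fin.last (k+5)) j = 0 := by
      simp only [m3', Matrix.of_apply, Fin.val_last]
      rw [if_pos trivial]
      exact if_neg hj' 
    rw [this, mul_zero, zero_mul]
  · intro h; exact absurd (Finset.mem_univ _) h


lemma step5 (k : ℕ) : (m4 k).det = (-1)^k * (m5 k).det := by
  rw [Matrix.det_succ_column (m4 k) (Fin.last (k+4))]
  rw [Finset.sum_eq_single (0 : Fin (k+5))]
  · have h0l : m4 k 0 (Fin.last (k+4)) = 1 := by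
      simp [m4]
    rw [h0l, Fin.succAbove_zero, Fin.succAbove_last]
    simp only [Fin.val_zero, Fin.val_last, zero_add, mul_one]
    congr 1
    · rw [show k + 4 = k + 2*2 from by ring, pow_add, pow_mul]
      norm_num
    · congr 1
      ext i j
      have hi := i.isLt; have hj := j.isLt
      simp only [m4, m5, Matrix.submatrix_apply, Matrix.of_apply, Fin.val_succ,
        Fin.coe_castSucc]
      rw [if_neg (by omega)]
      split_ifs <;> first | rfl | omega
  · intro i _ hi0
    have hi' : (i:ℕ) ≠ 0 := fun h => hi0 (Fin.ext h)
    have hil := i.isLt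
    have : m4 k i (Fin.last (k+4)) = 0 := by
      simp [m4, hi', hi0]
    rw [this, mul_zero, zero_mul]
  · intro h; exact absurd (Finset.mem_univ _) h


lemma step6 (k : ℕ) : (m5 k).det = -Polynomial.X * Pp (k+3) := by
  rw [Matrix.det_succ_column_zero (m5 k)]
  rw [Finset.sum_eq_single (0 : Fin (k+4))]
  · have h00 : m5 k 0 0 = -Polynomial.X := by
      simp [m5]
    rw [h00, Fin.succAbove_zero]
    simp only [Fin.val_zero, pow_zero, one_mul]
    congr 1
    rw [Pp]
    congr 1
    ext i j
    have hi := i.isLt; have hj := j.isLt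
    simp only [m5, adjA, Matrix.submatrix_apply, Matrix.of_apply, Fin.val_succ,
      Matrix.sub_apply, Matrix.map_apply, Matrix.scalar_apply, Matrix.diagonal_apply,
      apply_ite Polynomial.C, Polynomial.C_1, Polynomial.C_0, Fin.ext_iff]
    split_ifs <;> first | rfl | omega
  · intro i _ hi0
    have hi' : (i:ℕ) ≠ 0 := fun h => hi0 (Fin.ext h)
    have hil := i.isLt
    have : m5 k i 0 = 0 := by
      simp only [m5, Matrix.of_apply]
      rw [if_neg (by simp only [Fin.val_zero]; omega), if_neg (by simp only [Fin.val_zero]; omega), sub_zero]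
    rw [this, mul_zero, zero_mul]
  · intro h; exact absurd (Finset.mem_univ _) h


end QpAux

/-- Intermediate identity in the proof of Lemma 4.2:
`Q_n(λ) = (1 - λ) P_n(λ) + λ² P_{n-4}(λ)` for `n ≥ 7`. -/
theorem Qp_eq_Pp_intermediate (n : ℕ) (hn : 7 ≤ n) :
    Qp n = (1 - Polynomial.X) * Pp n + Polynomial.X ^ 2 * Pp (n - 4) := by
  obtain ⟨k, rfl⟩ : ∃ k, n = k + 7 := ⟨n - 7, by omega⟩
  have h4 : k + 7 - 4 = k + 3 := by omega
  rw [h4, QpAux.step1 k, QpAux.step2 k, QpAux.step3 k, QpAux.step4 k, QpAux.step5 k,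
    QpAux.step6 k]
  have hsign : ((-1 : Polynomial ℤ))^(k+7) * ((-1 : Polynomial ℤ))^k = -1 := by
    rw [← pow_add]; exact Odd.neg_one_pow ⟨k+3, by ring⟩
  linear_combination (-(Polynomial.X^2 * Pp (k+3))) * hsign
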